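/- Let $\lambda > 0$, $a \in (1,2]$, and define $f: \mathbb{N} \to \mathbb{R}$ by $f(0) = f(1) = 0$ and $f(n) = \sqrt{e^{\lambda} \frac{n!}{\lambda^n} \frac{1}{n^2 (\ln n)^a}}$ for $n \geq 2$. If $N$ is a Poisson random variable with parameter $\lambda$, then $\mathbb{E}[N f(N)^2] = \sum_{n=2}^\infty \frac{1}{n(\ln n)^a} < \infty$ while $\mathbb{E}[f(N)^2 \ln^+(f(N)^2)] = \infty$. -/

import Mathlib

open Nat

lemma aux_half_le_log_two : (1/2 : ℝ) ≤ Real.log 2 := by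
  have := Real.log_two_gt_d9; linarith

lemma aux_log_two_le_one : Real.log 2 ≤ 1 := by
  have := Real.log_two_lt_d9; linarith

lemma aux_quarter_le_rpow {a : ℝ} (ha1 : 1 < a) (ha2 : a ≤ 2) {n : ℕ} (hn : 2 ≤ n) :
    (1/4 : ℝ) ≤ Real.log n ^ a := by
  have hlog2pos : (0:ℝ) < Real.log 2 := Real.log_pos (by norm_num)
  have h1 : Real.log 2 ^ (2:ℝ) ≤ Real.log 2 ^ a :=
    Real.rpow_le_rpow_of_exponent_ge hlog2pos aux_log_two_le_one ha2
  have h2 : Real.log 2 ^ a ≤ Real.log n ^ a := by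
    apply Real.rpow_le_rpow hlog2pos.le _ (by linarith)
    exact Real.log_le_log (by norm_num) (by exact_mod_cast hn)
  have h3 : (1/4 : ℝ) ≤ Real.log 2 ^ (2:ℝ) := by
    rw [show (2:ℝ) = ((2:ℕ):ℝ) by norm_num, Real.rpow_natCast]
    nlinarith [aux_half_le_log_two]
  linarith

lemma aux_pos {a : ℝ} {n : ℕ} (hn : 2 ≤ n) : (0:ℝ) < (n:ℝ) * Real.log n ^ a := by
  have hL : (0:ℝ) < Real.log n := Real.log_pos (by exact_mod_cast hn)
  have : (0:ℝ) < (n:ℝ) := by positivity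
  exact mul_pos this (Real.rpow_pos_of_pos hL a)

lemma aux_summable {a : ℝ} (ha1 : 1 < a) (ha2 : a ≤ 2) :
    Summable (fun n : ℕ => if 2 ≤ n then 1 / ((n:ℝ) * Real.log n ^ a) else 0) := by
  set H : ℕ → ℝ := fun n => if n ≤ 1 then 2 else 1 / ((n:ℝ) * Real.log n ^ a) with hH
  have ha0 : (0:ℝ) ≤ a := by linarith
  have hle2 : ∀ n : ℕ, 2 ≤ n → 1 / ((n:ℝ) * Real.log n ^ a) ≤ 2 := by
    intro n hn
    have h1 : (1/2 : ℝ) ≤ (n:ℝ) * Real.log n ^ a := by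
      have := aux_quarter_le_rpow ha1 ha2 hn
      have hn2 : (2:ℝ) ≤ (n:ℝ) := by exact_mod_cast hn
      nlinarith
    rw [div_le_iff₀ (aux_pos hn)]; linarith
  have hnonneg : ∀ n, 0 ≤ H n := by
    intro n; simp only [hH]
    split
    · norm_num
    · next h =>
      have := aux_pos (a := a) (n := n) (by omega)
      positivity
  have hmono : ∀ ⦃m n : ℕ⦄, 0 < m → m ≤ n → H n ≤ H m := by
    intro m n hm hmn
    simp only [hH]
    by_cases hn1 : n ≤ 1
    · rw [if_pos hn1, if_pos (by omega)]
    · rw [if_neg hn1]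
      by_cases hm1 : m ≤ 1
      · rw [if_pos hm1]; exact hle2 n (by omega)
      · rw [if_neg hm1]
        apply one_div_le_one_div_of_le (aux_pos (by omega))
        have hLm : (0:ℝ) ≤ Real.log m := Real.log_natCast_nonneg m
        apply mul_le_mul (by exact_mod_cast hmn) _ (Real.rpow_nonneg hLm a) (Nat.cast_nonneg n)
        exact Real.rpow_le_rpow hLm (Real.log_le_log (by positivity) (by exact_mod_cast hmn)) ha0
  have hcond : Summable (fun k : ℕ => (2:ℝ) ^ k * H (2 ^ k)) := by
    rw [← summable_nat_add_iff 1]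
    have base : Summable (fun n : ℕ => ((n:ℝ)) ^ (-a)) :=
      Real.summable_nat_rpow.mpr (by linarith)
    have shifted : Summable (fun k : ℕ => (((k+1:ℕ)):ℝ) ^ (-a)) :=
      (summable_nat_add_iff 1).mpr base
    apply Summable.congr (shifted.mul_left ((Real.log 2) ^ (-a)))
    intro k
    have h2k : ¬ ((2:ℕ) ^ (k+1) ≤ 1) := by
      have : 2 ≤ 2^(k+1) := Nat.one_lt_two_pow (by omega)
      omega
    simp only [hH, h2k, if_false]
    have hcast : (((2:ℕ) ^ (k+1) : ℕ) : ℝ) = (2:ℝ) ^ (k+1) := by push_cast; ring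
    rw [hcast]
    rw [Real.log_pow]
    have hlog2pos : (0:ℝ) < Real.log 2 := Real.log_pos (by norm_num)
    have hmul : (((k+1:ℕ):ℝ) * Real.log 2) ^ a = ((k+1:ℕ):ℝ) ^ a * Real.log 2 ^ a :=
      Real.mul_rpow (Nat.cast_nonneg _) hlog2pos.le
    push_cast at hmul ⊢
    rw [hmul]
    rw [Real.rpow_neg hlog2pos.le, Real.rpow_neg (by positivity)]
    have h1 : ((k:ℝ)+1) ^ a ≠ 0 := by positivity
    have h2 : Real.log 2 ^ a ≠ 0 := by positivity
    have h3 : (2:ℝ) ^ (k+1) ≠ 0 := by positivity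
    field_simp
  have := (summable_condensed_iff_of_nonneg hnonneg hmono).mp hcond
  apply this.of_nonneg_of_le
  · intro n; split
    · next h => have := aux_pos (a := a) h; positivity
    · exact le_rfl
  · intro n
    simp only [hH]
    by_cases hn : 2 ≤ n
    · rw [if_pos hn, if_neg (by omega)]
    · rw [if_neg hn, if_pos (by omega)]
      norm_num

lemma aux_pos1 {n : ℕ} (hn : 2 ≤ n) : (0:ℝ) < (n:ℝ) * Real.log n := by
  have hL : (0:ℝ) < Real.log n := Real.log_pos (by exact_mod_cast hn)
  have : (0:ℝ) < (n:ℝ) := by positivity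
  exact mul_pos this hL

lemma aux_not_summable :
    ¬ Summable (fun n : ℕ => if n ≤ 1 then (1:ℝ) else 1 / ((n:ℝ) * Real.log n)) := by
  intro h
  set G : ℕ → ℝ := fun n => if n ≤ 1 then (1:ℝ) else 1 / ((n:ℝ) * Real.log n) with hG
  have hnonneg : ∀ n, 0 ≤ G n := by
    intro n; simp only [hG]; split
    · norm_num
    · next hn => have := aux_pos1 (n := n) (by omega); positivity
  have hmono : ∀ ⦃m n : ℕ⦄, 0 < m → m ≤ n → G n ≤ G m := by
    intro m n hm hmn
    simp only [hG]
    by_cases hn1 : n ≤ 1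
    · rw [if_pos hn1, if_pos (by omega)]
    · rw [if_neg hn1]
      by_cases hm1 : m ≤ 1
      · rw [if_pos hm1]
        rw [div_le_iff₀ (aux_pos1 (by omega))]
        have h2 : (2:ℝ) ≤ (n:ℝ) := by exact_mod_cast (by omega : 2 ≤ n)
        have h3 : Real.log 2 ≤ Real.log n := Real.log_le_log (by norm_num) h2
        nlinarith [aux_half_le_log_two]
      · rw [if_neg hm1]
        apply one_div_le_one_div_of_le (aux_pos1 (by omega))
        have hLm : (0:ℝ) ≤ Real.log m := Real.log_natCast_nonneg m
        exact mul_le_mul (by exact_mod_cast hmn)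
          (Real.log_le_log (by positivity) (by exact_mod_cast hmn)) hLm (Nat.cast_nonneg n)
  have hcond := (summable_condensed_iff_of_nonneg hnonneg hmono).mpr h
  rw [← summable_nat_add_iff 1] at hcond
  have hlog2pos : (0:ℝ) < Real.log 2 := Real.log_pos (by norm_num)
  have heq : ∀ k : ℕ, Real.log 2 * ((2:ℝ) ^ (k+1) * G (2 ^ (k+1))) = 1 / ((k:ℝ)+1) := by
    intro k
    have h2k : ¬ ((2:ℕ) ^ (k+1) ≤ 1) := by
      have : 2 ≤ 2^(k+1) := Nat.one_lt_two_pow (by omega)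
      omega
    simp only [hG, h2k, if_false]
    have hcast : (((2:ℕ) ^ (k+1) : ℕ) : ℝ) = (2:ℝ) ^ (k+1) := by push_cast; ring
    rw [hcast, Real.log_pow]
    have h3 : (2:ℝ) ^ (k+1) ≠ 0 := by positivity
    have h4 : ((k:ℝ)+1) ≠ 0 := by positivity
    push_cast
    field_simp
  have hsum : Summable (fun k : ℕ => 1 / ((k:ℝ)+1)) := by
    apply Summable.congr (hcond.mul_left (Real.log 2))
    exact heq
  have : Summable (fun k : ℕ => 1 / ((k:ℕ):ℝ)) := by
    rw [← summable_nat_add_iff 1]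
    apply hsum.congr
    intro k
    push_cast
    ring
  exact Real.not_summable_one_div_natCast this

lemma aux_ofReal_tsum_top {g : ℕ → ℝ} (hg : ∀ n, 0 ≤ g n) (h : ¬ Summable g) :
    (∑' n, ENNReal.ofReal (g n)) = ⊤ := by
  by_contra hne
  apply h
  have := ENNReal.summable_toReal hne
  apply this.congr
  intro n
  exact ENNReal.toReal_ofReal (hg n)

lemma aux_log_factorial {n : ℕ} (hn : 2 ≤ n) (hL1 : 1 ≤ Real.log n) :
    (n:ℝ)/4 * (Real.log n - 1) ≤ Real.log (n ! : ℝ) := by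
  set m := n / 2 with hm_def
  have hnat : (m+1)^m ≤ n ! := by
    calc (m+1)^m ≤ m ! * (m+1)^m := Nat.le_mul_of_pos_left _ m.factorial_pos
    _ ≤ (m+m)! := Nat.factorial_mul_pow_le_factorial
    _ ≤ n ! := Nat.factorial_le (by omega)
  have hcast : (((m+1):ℕ):ℝ)^(m:ℕ) ≤ ((n !:ℕ):ℝ) := by exact_mod_cast hnat
  have hlog1 : (m:ℝ) * Real.log ((m+1:ℕ):ℝ) ≤ Real.log (n !:ℝ) := by
    have := Real.log_le_log (by positivity) hcast
    rwa [Real.log_pow] at this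
  have hm4 : (n:ℝ) ≤ 4*(m:ℝ) := by exact_mod_cast (by omega : n ≤ 4*m)
  have hlogm1 : Real.log n - 1 ≤ Real.log ((m+1:ℕ):ℝ) := by
    have hnpos : (0:ℝ) < (n:ℝ) := by exact_mod_cast (by omega : 0 < n)
    have hd : Real.log ((n:ℝ)/2) ≤ Real.log ((m+1:ℕ):ℝ) := by
      apply Real.log_le_log (by positivity)
      have : n ≤ 2*(m+1) := by omega
      have : (n:ℝ) ≤ 2*((m:ℝ)+1) := by exact_mod_cast this
      push_cast
      linarith
    rw [Real.log_div hnpos.ne' two_ne_zero] at hd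
    have := Real.log_two_lt_d9
    linarith
  calc (n:ℝ)/4 * (Real.log n - 1) ≤ (m:ℝ) * Real.log ((m+1:ℕ):ℝ) := by
        apply mul_le_mul (by linarith) hlogm1 (by linarith) (Nat.cast_nonneg m)
    _ ≤ Real.log (n !:ℝ) := hlog1

theorem stmt_11 (lam a : ℝ) (hlam : 0 < lam) (ha : a ∈ Set.Ioc (1:ℝ) 2)
    (f : ℕ → ℝ) (hf0 : f 0 = 0) (hf1 : f 1 = 0)
    (hf : ∀ n : ℕ, 2 ≤ n →
      f n = Real.sqrt (Real.exp lam * (n ! / lam ^ n) * (1 / (n ^ 2 * Real.log n ^ a)))) :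
    Summable (fun n : ℕ => (n : ℝ) * f n ^ 2 * (Real.exp (-lam) * lam ^ n / n !)) ∧
    (∑' n : ℕ, (n : ℝ) * f n ^ 2 * (Real.exp (-lam) * lam ^ n / n !))
      = (∑' n : ℕ, if 2 ≤ n then 1 / (n * Real.log n ^ a) else 0) ∧
    (∑' n : ℕ, ENNReal.ofReal (f n ^ 2 * max (Real.log (f n ^ 2)) 0
        * (Real.exp (-lam) * lam ^ n / n !))) = ⊤ := by
  obtain ⟨ha1, ha2⟩ := ha
  -- basic facts for n ≥ 2
  have hbasic : ∀ n : ℕ, 2 ≤ n →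
      f n ^ 2 = Real.exp lam * (n ! / lam ^ n) * (1 / ((n:ℝ) ^ 2 * Real.log n ^ a)) := by
    intro n hn
    have hL : (0:ℝ) < Real.log n := Real.log_pos (by exact_mod_cast hn)
    have hLa : (0:ℝ) < Real.log n ^ a := Real.rpow_pos_of_pos hL a
    have hfacpos : (0:ℝ) < ((n ! : ℕ):ℝ) := by exact_mod_cast n.factorial_pos
    have hP : (0:ℝ) ≤ Real.exp lam * (n ! / lam ^ n) * (1 / ((n:ℝ) ^ 2 * Real.log n ^ a)) := by
      apply le_of_lt
      apply mul_pos (mul_pos (Real.exp_pos lam) (div_pos hfacpos (pow_pos hlam n)))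
      apply _root_.div_pos one_pos
      apply mul_pos (by positivity) hLa
    rw [hf n hn, Real.sq_sqrt hP]
  have hEq : ∀ n : ℕ, (n : ℝ) * f n ^ 2 * (Real.exp (-lam) * lam ^ n / n !) =
      if 2 ≤ n then 1 / ((n:ℝ) * Real.log n ^ a) else 0 := by
    intro n
    by_cases hn : 2 ≤ n
    · rw [if_pos hn, hbasic n hn]
      have hL : (0:ℝ) < Real.log n := Real.log_pos (by exact_mod_cast hn)
      have hLa : (0:ℝ) < Real.log n ^ a := Real.rpow_pos_of_pos hL a
      have hn0 : ((n:ℝ)) ≠ 0 := by positivity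
      have hfac : ((n ! : ℕ):ℝ) ≠ 0 := by exact_mod_cast n.factorial_ne_zero
      have hlamn : lam ^ n ≠ 0 := pow_ne_zero _ hlam.ne'
      rw [Real.exp_neg]
      have he : Real.exp lam ≠ 0 := Real.exp_ne_zero lam
      field_simp
    · rw [if_neg hn]
      interval_cases n <;> simp [hf0, hf1]
  have hsum1 : Summable (fun n : ℕ => (n : ℝ) * f n ^ 2 * (Real.exp (-lam) * lam ^ n / n !)) :=
    (summable_congr hEq).mpr (aux_summable ha1 ha2)
  refine ⟨hsum1, tsum_congr hEq, ?_⟩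
  -- part C : divergence
  set A := |Real.log lam| with hA_def
  have hA0 : 0 ≤ A := abs_nonneg _
  obtain ⟨N0, hN0⟩ := exists_nat_ge (Real.exp (40 + 8*A))
  set N := N0 + 3 with hN_def
  clear_value N
  set g : ℕ → ℝ := fun n => if N ≤ n then 1/(8*((n:ℝ)*Real.log n)) else 0 with hg_def
  have hgnonneg : ∀ n, 0 ≤ g n := by
    intro n; simp only [hg_def]; split
    · next hn =>
      have := aux_pos1 (n := n) (by omega)
      positivity
    · exact le_rfl
  -- the key pointwise bound for n ≥ N
  have hkey : ∀ n : ℕ, N ≤ n →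
      1/(8*((n:ℝ)*Real.log n)) ≤ f n ^ 2 * max (Real.log (f n ^ 2)) 0
        * (Real.exp (-lam) * lam ^ n / n !) := by
    intro n hn
    have hn2 : 2 ≤ n := by omega
    have hL : (0:ℝ) < Real.log n := Real.log_pos (by exact_mod_cast hn2)
    have hLa : (0:ℝ) < Real.log n ^ a := Real.rpow_pos_of_pos hL a
    have hnpos : (0:ℝ) < (n:ℝ) := by exact_mod_cast (by omega : 0 < n)
    have hexpK : Real.exp (40 + 8*A) ≤ (n:ℝ) := by
      calc Real.exp (40 + 8*A) ≤ (N0 : ℝ) := hN0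
        _ ≤ (n:ℝ) := by exact_mod_cast (by omega : N0 ≤ n)
    have hKL : 40 + 8*A ≤ Real.log n := by
      have := Real.log_le_log (Real.exp_pos _) hexpK
      rwa [Real.log_exp] at this
    have hL1 : 1 ≤ Real.log n := by linarith
    -- log of f n ^ 2
    have hfacpos : (0:ℝ) < ((n ! : ℕ):ℝ) := by exact_mod_cast n.factorial_pos
    have hfac : ((n ! : ℕ):ℝ) ≠ 0 := hfacpos.ne'
    have hlamn : lam ^ n ≠ 0 := pow_ne_zero _ hlam.ne'
    have he : Real.exp lam ≠ 0 := Real.exp_ne_zero lam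
    have hn0 : ((n:ℝ)) ≠ 0 := hnpos.ne'
    have hn2' : ((n:ℝ))^2 ≠ 0 := by positivity
    have hlogP : Real.log (f n ^ 2)
        = lam + Real.log (n ! : ℝ) - (n:ℝ) * Real.log lam - 2 * Real.log n
          - a * Real.log (Real.log n) := by
      rw [hbasic n hn2,
        Real.log_mul (mul_ne_zero he (div_ne_zero hfac hlamn))
          (by positivity : (1:ℝ)/((n:ℝ)^2*Real.log n ^ a) ≠ 0),
        Real.log_mul he (div_ne_zero hfac hlamn), Real.log_exp,
        Real.log_div hfac hlamn, Real.log_pow, one_div,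
        Real.log_inv, Real.log_mul hn2' hLa.ne', Real.log_pow, Real.log_rpow hL]
      push_cast
      ring
    have hlogfac := aux_log_factorial hn2 hL1
    have hmul1 : 5*(n:ℝ) + (n:ℝ)*A ≤ (n:ℝ)/8 * Real.log n := by
      calc 5*(n:ℝ) + (n:ℝ)*A = (n:ℝ)/8*(40+8*A) := by ring
        _ ≤ (n:ℝ)/8 * Real.log n := by
            apply mul_le_mul_of_nonneg_left hKL (by positivity)
    have hmul2 : (n:ℝ)*Real.log lam ≤ (n:ℝ)*A :=
      mul_le_mul_of_nonneg_left (le_abs_self _) (Nat.cast_nonneg n)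
    have hLn : Real.log n ≤ (n:ℝ) := Real.log_le_self (Nat.cast_nonneg n)
    have hlogL_le : Real.log (Real.log n) ≤ Real.log n := Real.log_le_self (by linarith)
    have hlogL0 : 0 ≤ Real.log (Real.log n) := Real.log_nonneg hL1
    have haLL : a * Real.log (Real.log n) ≤ 2 * Real.log n :=
      mul_le_mul ha2 hlogL_le hlogL0 (by norm_num)
    have hlogP_ge : (n:ℝ)/8 * Real.log n ≤ Real.log (f n ^ 2) := by
      rw [hlogP]
      linarith [hlogfac, hmul1, hmul2, hLn, haLL, hlam.le]
    -- rewrite the term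
    have hcoef : f n ^ 2 * (Real.exp (-lam) * lam ^ n / n !)
        = 1 / ((n:ℝ)^2 * Real.log n ^ a) := by
      rw [hbasic n hn2, Real.exp_neg]
      field_simp
    have hterm : f n ^ 2 * max (Real.log (f n ^ 2)) 0 * (Real.exp (-lam) * lam ^ n / n !)
        = max (Real.log (f n ^ 2)) 0 * (1 / ((n:ℝ)^2 * Real.log n ^ a)) := by
      rw [← hcoef]; ring
    rw [hterm]
    have hM : (n:ℝ)/8 * Real.log n ≤ max (Real.log (f n ^ 2)) 0 :=
      le_trans hlogP_ge (le_max_left _ _)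
    have hXpos : (0:ℝ) < (n:ℝ)^2 * Real.log n ^ a := mul_pos (by positivity) hLa
    have hstep : 1/(8*((n:ℝ)*Real.log n))
        ≤ ((n:ℝ)/8 * Real.log n) * (1 / ((n:ℝ)^2 * Real.log n ^ a)) := by
      have hLa2 : Real.log n ^ a ≤ Real.log n ^ (2:ℕ) := by
        rw [← Real.rpow_natCast (Real.log n) 2]
        exact Real.rpow_le_rpow_of_exponent_le hL1 (by push_cast; linarith)
      have heq2 : ((n:ℝ)/8 * Real.log n) * (1 / ((n:ℝ)^2 * Real.log n ^ a))
          = ((n:ℝ)*Real.log n) / (8*((n:ℝ)^2 * Real.log n ^ a)) := by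
        field_simp
      rw [heq2, div_le_div_iff₀ (by positivity : (0:ℝ) < 8*((n:ℝ)*Real.log n))
        (by positivity : (0:ℝ) < 8*((n:ℝ)^2 * Real.log n ^ a))]
      have := mul_le_mul_of_nonneg_left hLa2 (by positivity : (0:ℝ) ≤ 8*(n:ℝ)^2)
      nlinarith
    calc 1/(8*((n:ℝ)*Real.log n))
        ≤ ((n:ℝ)/8 * Real.log n) * (1 / ((n:ℝ)^2 * Real.log n ^ a)) := hstep
      _ ≤ max (Real.log (f n ^ 2)) 0 * (1 / ((n:ℝ)^2 * Real.log n ^ a)) := by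
          apply mul_le_mul_of_nonneg_right hM (by positivity)
  -- g is not summable
  have hnotsum : ¬ Summable g := by
    intro h
    apply aux_not_summable
    rw [← summable_nat_add_iff N]
    have h2 : Summable (fun n : ℕ => (8:ℝ) * g (n + N)) :=
      (((summable_nat_add_iff N).mpr h)).mul_left 8
    apply h2.congr
    intro n
    have hN : N ≤ n + N := Nat.le_add_left N n
    have hge : ¬ (n + N ≤ 1) := by omega
    have hpos := aux_pos1 (n := n + N) (by omega)
    have hL : (0:ℝ) < Real.log ((n+N:ℕ):ℝ) :=
      Real.log_pos (by exact_mod_cast (by omega : 1 < n + N))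
    have hposn : (0:ℝ) < ((n+N:ℕ):ℝ) := by exact_mod_cast (by omega : 0 < n + N)
    have hx : ((n:ℝ) + (N:ℝ)) * Real.log ((n:ℝ) + (N:ℝ)) ≠ 0 := by
      have := mul_pos hposn hL
      push_cast at this
      exact this.ne'
    simp only [hg_def, if_pos hN, if_neg hge]
    push_cast
    rw [mul_one_div, div_eq_div_iff (mul_ne_zero (by norm_num) hx) hx]
    ring
  -- conclude
  have htop : (∑' n : ℕ, ENNReal.ofReal (g n)) = ⊤ := aux_ofReal_tsum_top hgnonneg hnotsum
  have hle : ∀ n : ℕ, ENNReal.ofReal (g n) ≤ ENNReal.ofReal (f n ^ 2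
      * max (Real.log (f n ^ 2)) 0 * (Real.exp (-lam) * lam ^ n / n !)) := by
    intro n
    by_cases hn : N ≤ n
    · apply ENNReal.ofReal_le_ofReal
      simp only [hg_def, if_pos hn]
      exact hkey n hn
    · simp only [hg_def, if_neg hn, ENNReal.ofReal_zero]
      exact _root_.zero_le
  have := ENNReal.tsum_le_tsum hle
  rw [htop] at this
  exact top_le_iff.mp this
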